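/- For any clustering of a complete signed graph in which every cluster is δ-clean with δ ≤ 1/4, the total number of disagreeing edges is at most 4 times the minimum number of disagreements of any clustering. -/

import Mathlib

attribute [local instance] Classical.propDecidable

def Nplus {V : Type*} [Fintype V] [DecidableEq V] (pos : V → V → Bool) (v : V) : Finset V :=
  insert v (Finset.univ.filter (fun u => pos u v = true))

def IsGood {V : Type*} [Fintype V] [DecidableEq V]
    (pos : V → V → Bool) (δ : ℝ) (v : V) (C : Finset V) : Prop :=
  (1 - δ) * (C.card : ℝ) ≤ ((Nplus pos v ∩ C).card : ℝ) ∧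
  ((Nplus pos v ∩ Cᶜ).card : ℝ) ≤ δ * (C.card : ℝ)

def IsClean {V : Type*} [Fintype V] [DecidableEq V]
    (pos : V → V → Bool) (δ : ℝ) (C : Finset V) : Prop :=
  ∀ v ∈ C, IsGood pos δ v C

def Disagree {V : Type*} (pos : V → V → Bool) (c : V → ℕ) (u v : V) : Prop :=
  (pos u v = true ∧ c u ≠ c v) ∨ (pos u v = false ∧ c u = c v)

noncomputable def disagreements {V : Type*} [Fintype V] [LinearOrder V]
    (pos : V → V → Bool) (c : V → ℕ) : ℕ :=
  (Finset.univ.filter (fun p : V × V => p.1 < p.2 ∧ Disagree pos c p.1 p.2)).card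

namespace CC4
open Finset
set_option linter.unusedSectionVars false

variable {V : Type*} [Fintype V] [LinearOrder V]

def clu (c : V → ℕ) (v : V) : Finset V := Finset.univ.filter (fun u => c u = c v)

def sz (c : V → ℕ) (v : V) : ℕ := (clu c v).card

lemma mem_clu_self (c : V → ℕ) (v : V) : v ∈ clu c v := by simp [clu]

lemma sz_pos (c : V → ℕ) (v : V) : 0 < sz c v := Finset.card_pos.2 ⟨v, mem_clu_self c v⟩

lemma clu_congr (c : V → ℕ) {u v : V} (h : c u = c v) : clu c u = clu c v := by
  ext w; simp [clu, h]

lemma sz_congr (c : V → ℕ) {u v : V} (h : c u = c v) : sz c u = sz c v := by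
  rw [sz, sz, clu_congr c h]

def desig (c : V → ℕ) (u v : V) : Prop :=
  sz c u < sz c v ∨ (sz c u = sz c v ∧ c u < c v)

lemma desig_total {c : V → ℕ} {u v : V} (h : c u ≠ c v) : desig c u v ∨ desig c v u := by
  rcases lt_trichotomy (sz c u) (sz c v) with h1 | h1 | h1
  · exact Or.inl (Or.inl h1)
  · rcases lt_or_gt_of_ne h with h2 | h2
    · exact Or.inl (Or.inr ⟨h1, h2⟩)
    · exact Or.inr (Or.inr ⟨h1.symm, h2⟩)
  · exact Or.inr (Or.inl h1)

lemma desig_le {c : V → ℕ} {u v : V} (h : desig c u v) : sz c u ≤ sz c v := by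
  rcases h with h | h
  · exact h.le
  · exact h.1.le

noncomputable def srt (x y : V) : V × V := if x < y then (x, y) else (y, x)

lemma srt_eq_of_lt {x y : V} (h : x < y) : srt x y = (x, y) := if_pos h

lemma srt_eq_of_gt {x y : V} (h : y < x) : srt x y = (y, x) := if_neg (not_lt.2 h.le)

lemma srt_cases {x y p q : V} (h : srt x y = (p, q)) :
    (x = p ∧ y = q) ∨ (x = q ∧ y = p) := by
  unfold srt at h
  split at h
  · exact Or.inl ⟨(Prod.mk.injEq .. ▸ h).1, (Prod.mk.injEq .. ▸ h).2⟩
  · exact Or.inr ⟨(Prod.mk.injEq .. ▸ h).2, (Prod.mk.injEq .. ▸ h).1⟩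

lemma Dis_symm {pos : V → V → Bool} (hsym : ∀ u v, pos u v = pos v u) (c : V → ℕ) (u v : V) :
    Disagree pos c u v ↔ Disagree pos c v u := by
  unfold Disagree
  rw [hsym u v]
  constructor
  · rintro (⟨h1, h2⟩ | ⟨h1, h2⟩)
    · exact Or.inl ⟨h1, h2.symm⟩
    · exact Or.inr ⟨h1, h2.symm⟩
  · rintro (⟨h1, h2⟩ | ⟨h1, h2⟩)
    · exact Or.inl ⟨h1, h2.symm⟩
    · exact Or.inr ⟨h1, h2.symm⟩


variable {pos : V → V → Bool} {δ : ℝ} {c : V → ℕ}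

lemma good_of_clean (hclean : ∀ i : ℕ, IsClean pos δ (Finset.univ.filter (fun v => c v = i)))
    (v : V) :
    (1 - δ) * (sz c v : ℝ) ≤ ((Nplus pos v ∩ clu c v).card : ℝ) ∧
      ((Nplus pos v ∩ (clu c v)ᶜ).card : ℝ) ≤ δ * (sz c v : ℝ) := by
  have hv : v ∈ Finset.univ.filter (fun u => c u = c v) := by simp
  have h := hclean (c v) v hv
  have hset : (Finset.univ.filter (fun u => c u = c v)) = clu c v := by
    ext w; simp [clu]
  rw [hset] at h
  exact ⟨h.1, h.2⟩

lemma neg_card (hclean : ∀ i : ℕ, IsClean pos δ (Finset.univ.filter (fun v => c v = i)))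
    (v : V) : ((clu c v \ Nplus pos v).card : ℝ) ≤ δ * (sz c v : ℝ) := by
  have h1 := (good_of_clean hclean v).1
  have h2 : ((clu c v ∩ Nplus pos v).card : ℕ) + (clu c v \ Nplus pos v).card = sz c v :=
    Finset.card_inter_add_card_sdiff _ _
  have h3 : (clu c v ∩ Nplus pos v) = (Nplus pos v ∩ clu c v) := Finset.inter_comm _ _
  have h4 : ((clu c v ∩ Nplus pos v).card : ℝ) + ((clu c v \ Nplus pos v).card : ℝ)
      = (sz c v : ℝ) := by exact_mod_cast congrArg (Nat.cast (R := ℝ)) h2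
  rw [h3] at h4
  nlinarith [h4]

lemma ext_card (hclean : ∀ i : ℕ, IsClean pos δ (Finset.univ.filter (fun v => c v = i)))
    (v : V) : ((Nplus pos v ∩ (clu c v)ᶜ).card : ℝ) ≤ δ * (sz c v : ℝ) :=
  (good_of_clean hclean v).2

lemma src_decomp (hsym : ∀ u v, pos u v = pos v u) (v : V) :
    Finset.univ.filter (fun x => Disagree pos c v x ∧ x ≠ v)
      = (clu c v \ Nplus pos v) ∪ (Nplus pos v ∩ (clu c v)ᶜ) := by
  ext x
  rw [Finset.mem_filter]
  simp only [Finset.mem_filter, Finset.mem_univ, true_and, Finset.mem_union, Finset.mem_sdiff,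
    Finset.mem_inter, Finset.mem_compl, Nplus, Finset.mem_insert, clu, Disagree]
  rw [hsym v x]
  constructor
  · rintro ⟨(⟨h1, h2⟩ | ⟨h1, h2⟩), h3⟩
    · right
      exact ⟨Or.inr h1, fun hh => h2 hh.symm⟩
    · left
      refine ⟨h2.symm, ?_⟩
      rintro (rfl | hh)
      · exact h3 rfl
      · rw [h1] at hh; exact Bool.false_ne_true hh
  · rintro (⟨h1, h2⟩ | ⟨h1, h2⟩)
    · push_neg at h2
      refine ⟨Or.inr ⟨?_, h1.symm⟩, h2.1⟩
      cases hb : pos x v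
      · rfl
      · exact absurd hb h2.2
    · rcases h1 with rfl | h1
      · exact absurd rfl h2
      · exact ⟨Or.inl ⟨h1, fun hh => h2 hh.symm⟩, fun hh => h2 (by rw [hh])⟩

lemma src_card (hsym : ∀ u v, pos u v = pos v u)
    (hclean : ∀ i : ℕ, IsClean pos δ (Finset.univ.filter (fun v => c v = i)))
    (v : V) :
    (((Finset.univ.filter (fun x => Disagree pos c v x ∧ x ≠ v)).card : ℝ))
      ≤ 2 * (δ * (sz c v : ℝ)) := by
  rw [src_decomp hsym v]
  have h1 := neg_card hclean v
  have h2 := ext_card hclean v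
  have h3 := Finset.card_union_le (clu c v \ Nplus pos v) (Nplus pos v ∩ (clu c v)ᶜ)
  have h4 : (((clu c v \ Nplus pos v) ∪ (Nplus pos v ∩ (clu c v)ᶜ)).card : ℝ)
      ≤ ((clu c v \ Nplus pos v).card : ℝ) + ((Nplus pos v ∩ (clu c v)ᶜ).card : ℝ) := by
    exact_mod_cast h3
  linarith

noncomputable def Wint (pos : V → V → Bool) (c : V → ℕ) (u v : V) : Finset V :=
  Finset.univ.filter (fun w => c w = c u ∧ w ≠ u ∧ w ≠ v ∧ pos u w = true ∧ pos v w = true)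

noncomputable def Tb (pos : V → V → Bool) (c : V → ℕ) (a b : V) : Finset V :=
  Finset.univ.filter (fun w => c w = c b ∧ w ≠ b ∧ pos b w = true ∧ pos a w = false)

noncomputable def Wf (pos : V → V → Bool) (c : V → ℕ) (e : V × V) : Finset V :=
  if c e.1 = c e.2 then Wint pos c e.1 e.2
  else if desig c e.1 e.2 then Tb pos c e.1 e.2 else Tb pos c e.2 e.1

lemma erase_card (hclean : ∀ i : ℕ, IsClean pos δ (Finset.univ.filter (fun v => c v = i)))
    (v : V) :
    (1 - δ) * (sz c v : ℝ) - 1 ≤ (((Nplus pos v ∩ clu c v).erase v).card : ℝ) := by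
  have hv : v ∈ Nplus pos v ∩ clu c v := by
    simp [Nplus, clu, Finset.mem_insert]
  rw [Finset.card_erase_of_mem hv]
  have h1 := (good_of_clean hclean v).1
  have h2 : 1 ≤ (Nplus pos v ∩ clu c v).card := Finset.card_pos.2 ⟨v, hv⟩
  have : (((Nplus pos v ∩ clu c v).card - 1 : ℕ) : ℝ)
      = ((Nplus pos v ∩ clu c v).card : ℝ) - 1 := by
    push_cast [Nat.cast_sub h2]; ring
  rw [this]
  linarith

lemma Wint_lb (hsym : ∀ u v, pos u v = pos v u) (hδ : δ ≤ 1/4)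
    (hclean : ∀ i : ℕ, IsClean pos δ (Finset.univ.filter (fun v => c v = i)))
    {u v : V} (hc : c u = c v) (hp : pos u v = false) (hne : u ≠ v) :
    (sz c u : ℝ) / 2 ≤ ((Wint pos c u v).card : ℝ) := by
  set Pu := (Nplus pos u ∩ clu c u).erase u with hPu
  set Pv := (Nplus pos v ∩ clu c v).erase v with hPv
  set C2 := (clu c u).erase u |>.erase v with hC2
  -- Pu ∩ Pv ⊆ Wint
  have hsub : Pu ∩ Pv ⊆ Wint pos c u v := by
    intro w hw
    simp only [hPu, hPv, Finset.mem_inter, Finset.mem_erase, Nplus, Finset.mem_insert,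
      Finset.mem_filter, Finset.mem_univ, true_and, clu] at hw
    obtain ⟨⟨hwu, hw1, hw2⟩, ⟨hwv, hw3, hw4⟩⟩ := hw
    have hpu : pos u w = true := by
      rcases hw1 with rfl | h
      · exact absurd rfl hwu
      · rw [hsym u w]; exact h
    have hpv : pos v w = true := by
      rcases hw3 with rfl | h
      · exact absurd rfl hwv
      · rw [hsym v w]; exact h
    simp only [Wint, Finset.mem_filter, Finset.mem_univ, true_and]
    exact ⟨hw2, hwu, hwv, hpu, hpv⟩
  -- Pu ⊆ C2, Pv ⊆ C2
  have hPuC : Pu ⊆ C2 := by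
    intro w hw
    simp only [hPu, Finset.mem_erase, Finset.mem_inter, Nplus, Finset.mem_insert] at hw
    obtain ⟨hwu, hw1, hw2⟩ := hw
    have hwv : w ≠ v := by
      intro he
      rcases hw1 with h | h
      · exact hwu h
      · have hh : pos w u = true := by simpa using h
        rw [he] at hh
        rw [hsym u v] at hp
        rw [hp] at hh
        exact Bool.false_ne_true hh
    simp only [hC2, Finset.mem_erase]
    exact ⟨hwv, hwu, hw2⟩
  have hPvC : Pv ⊆ C2 := by
    intro w hw
    simp only [hPv, Finset.mem_erase, Finset.mem_inter, Nplus, Finset.mem_insert] at hw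
    obtain ⟨hwv, hw1, hw2⟩ := hw
    have hwu : w ≠ u := by
      intro he
      rcases hw1 with h | h
      · exact hne (he.symm.trans h)
      · have hh : pos w v = true := by simpa using h
        rw [he] at hh
        rw [hp] at hh
        exact Bool.false_ne_true hh
    have : w ∈ clu c u := by rwa [clu_congr c hc]
    simp only [hC2, Finset.mem_erase]
    exact ⟨hwv, hwu, this⟩
  have hC2card : (C2.card : ℝ) = (sz c u : ℝ) - 2 := by
    have hu : u ∈ clu c u := mem_clu_self c u
    have hv' : v ∈ (clu c u).erase u := by
      refine Finset.mem_erase.2 ⟨hne.symm, ?_⟩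
      rw [clu_congr c hc]; exact mem_clu_self c v
    rw [hC2, Finset.card_erase_of_mem hv', Finset.card_erase_of_mem hu]
    have h2 : 2 ≤ (clu c u).card := by
      refine Finset.one_lt_card.2 ?_
      exact ⟨u, hu, v, by rw [clu_congr c hc]; exact mem_clu_self c v, hne⟩
    push_cast [Nat.cast_sub (by omega : 1 ≤ (clu c u).card - 1), Nat.cast_sub (by omega : 1 ≤ (clu c u).card)]
    rw [sz]; push_cast; ring
  have hincl : (Pu.card : ℝ) + (Pv.card : ℝ) - (C2.card : ℝ) ≤ ((Pu ∩ Pv).card : ℝ) := by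
    have h := Finset.card_inter_add_card_union Pu Pv
    have hunion : (Pu ∪ Pv).card ≤ C2.card :=
      Finset.card_le_card (Finset.union_subset hPuC hPvC)
    have h' : ((Pu ∩ Pv).card : ℝ) + ((Pu ∪ Pv).card : ℝ) = (Pu.card : ℝ) + (Pv.card : ℝ) := by
      exact_mod_cast congrArg (Nat.cast (R := ℝ)) h
    have h'' : ((Pu ∪ Pv).card : ℝ) ≤ (C2.card : ℝ) := by exact_mod_cast hunion
    linarith
  have hP1 := erase_card hclean u
  have hP2 := erase_card hclean v
  have hsz : sz c v = sz c u := sz_congr c hc.symm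
  rw [hsz] at hP2
  have hcard : ((Pu ∩ Pv).card : ℝ) ≤ ((Wint pos c u v).card : ℝ) := by
    exact_mod_cast Finset.card_le_card hsub
  have hs0 : (0:ℝ) ≤ (sz c u : ℝ) := by positivity
  rw [hC2card] at hincl
  nlinarith [hP1, hP2, hincl, hcard]

lemma one_le_ext (hclean : ∀ i : ℕ, IsClean pos δ (Finset.univ.filter (fun v => c v = i)))
    {a b : V} (hp : pos a b = true) (hc : c a ≠ c b) :
    (1 : ℝ) ≤ δ * (sz c b : ℝ) := by
  have ha : a ∈ Nplus pos b ∩ (clu c b)ᶜ := by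
    simp only [Finset.mem_inter, Nplus, Finset.mem_insert, Finset.mem_compl, clu,
      Finset.mem_filter, Finset.mem_univ, true_and]
    exact ⟨Or.inr hp, hc⟩
  have h1 : 1 ≤ (Nplus pos b ∩ (clu c b)ᶜ).card := Finset.card_pos.2 ⟨a, ha⟩
  have h2 := ext_card hclean b
  have : (1 : ℝ) ≤ ((Nplus pos b ∩ (clu c b)ᶜ).card : ℝ) := by exact_mod_cast h1
  linarith

lemma Tb_lb (hsym : ∀ u v, pos u v = pos v u) (hδ : δ ≤ 1/4)
    (hclean : ∀ i : ℕ, IsClean pos δ (Finset.univ.filter (fun v => c v = i)))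
    {a b : V} (hp : pos a b = true) (hc : c a ≠ c b) (hs : sz c a ≤ sz c b) :
    (sz c b : ℝ) / 4 ≤ ((Tb pos c a b).card : ℝ) ∧ (4 : ℝ) ≤ (sz c b : ℝ) := by
  have h1 : (1 : ℝ) ≤ δ * (sz c b : ℝ) := one_le_ext hclean hp hc
  have hb4 : (4 : ℝ) ≤ (sz c b : ℝ) := by nlinarith [sz_pos c b]
  have hδ0 : 0 ≤ δ := by nlinarith [sz_pos c b]
  set Pb := (Nplus pos b ∩ clu c b).erase b with hPb
  set Xa := Nplus pos a ∩ (clu c a)ᶜ with hXa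
  have hsub : Pb \ Xa ⊆ Tb pos c a b := by
    intro w hw
    simp only [hPb, hXa, Finset.mem_sdiff, Finset.mem_erase, Finset.mem_inter, Nplus,
      Finset.mem_insert, Finset.mem_compl, clu, Finset.mem_filter, Finset.mem_univ,
      true_and] at hw
    obtain ⟨⟨hwb, hw1, hw2⟩, hw3⟩ := hw
    have hpb : pos b w = true := by
      rcases hw1 with h | h
      · exact absurd h hwb
      · rw [hsym b w]; exact h
    have hcw : c w ≠ c a := by rw [hw2]; exact fun hh => hc hh.symm
    have hpa : pos a w = false := by
      by_contra hh
      have : pos w a = true := by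
        rw [hsym w a]; cases hq : pos a w
        · exact absurd hq hh
        · rfl
      exact hw3 ⟨Or.inr this, hcw⟩
    simp only [Tb, Finset.mem_filter, Finset.mem_univ, true_and]
    exact ⟨hw2, hwb, hpb, hpa⟩
  have hcard : (Pb.card : ℝ) ≤ ((Tb pos c a b).card : ℝ) + (Xa.card : ℝ) := by
    have h := Finset.card_le_card_sdiff_add_card (s := Pb) (t := Xa)
    have h' : ((Pb \ Xa).card : ℝ) ≤ ((Tb pos c a b).card : ℝ) := by
      exact_mod_cast Finset.card_le_card hsub
    have h'' : (Pb.card : ℝ) ≤ ((Pb \ Xa).card : ℝ) + (Xa.card : ℝ) := by exact_mod_cast h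
    linarith
  have hPbc := erase_card hclean b
  have hXaC := ext_card hclean a
  have hsza : (sz c a : ℝ) ≤ (sz c b : ℝ) := by exact_mod_cast hs
  have hXa' : (Xa.card : ℝ) ≤ δ * (sz c b : ℝ) := by
    have : δ * (sz c a : ℝ) ≤ δ * (sz c b : ℝ) := by nlinarith
    rw [hXa]; linarith [hXaC]
  constructor
  · nlinarith [hPbc, hcard, hXa', hb4]
  · exact hb4

lemma Wf_int_facts (hsym : ∀ u v, pos u v = pos v u) (hδ : δ ≤ 1/4)
    (hclean : ∀ i : ℕ, IsClean pos δ (Finset.univ.filter (fun v => c v = i)))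
    {u v : V} (hc : c u = c v) (hp : pos u v = false) (hne : u ≠ v) :
    (Wf pos c (u, v)).card ≠ 0 ∧ (((Wf pos c (u, v)).card : ℝ))⁻¹ ≤ 4 / (sz c u : ℝ) := by
  have hW : Wf pos c (u, v) = Wint pos c u v := if_pos hc
  have hlb := Wint_lb hsym hδ hclean hc hp hne
  have hs1 : (1 : ℝ) ≤ (sz c u : ℝ) := by exact_mod_cast sz_pos c u
  have hne0 : (Wf pos c (u, v)).card ≠ 0 := by
    intro h
    rw [hW] at h
    rw [h] at hlb
    norm_num at hlb
    linarith
  refine ⟨hne0, ?_⟩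
  have hpos : (0 : ℝ) < ((Wf pos c (u, v)).card : ℝ) := by
    have : 0 < (Wf pos c (u, v)).card := Nat.pos_of_ne_zero hne0
    exact_mod_cast this
  rw [hW]
  have hlb' : (sz c u : ℝ) / 2 ≤ ((Wint pos c u v).card : ℝ) := hlb
  have h2 : (((Wint pos c u v).card : ℝ))⁻¹ ≤ ((sz c u : ℝ) / 2)⁻¹ := by
    apply inv_anti₀
    · linarith
    · exact hlb'
  have h3 : ((sz c u : ℝ) / 2)⁻¹ = 2 / (sz c u : ℝ) := by
    field_simp
  rw [h3] at h2
  have h4 : 2 / (sz c u : ℝ) ≤ 4 / (sz c u : ℝ) := by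
    gcongr <;> norm_num
  linarith

lemma Wf_ext_facts (hsym : ∀ u v, pos u v = pos v u) (hδ : δ ≤ 1/4)
    (hclean : ∀ i : ℕ, IsClean pos δ (Finset.univ.filter (fun v => c v = i)))
    {u v : V} (hp : pos u v = true) (hc : c u ≠ c v) :
    (Wf pos c (u, v)).card ≠ 0 ∧ (((Wf pos c (u, v)).card : ℝ))⁻¹ ≤ 4 / (sz c u : ℝ)
      ∧ (((Wf pos c (u, v)).card : ℝ))⁻¹ ≤ 4 / (sz c v : ℝ) := by
  have key : ∀ x y : V, pos x y = true → c x ≠ c y → desig c x y →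
      ∀ W : Finset V, W = Tb pos c x y →
      W.card ≠ 0 ∧ ((W.card : ℝ))⁻¹ ≤ 4 / (sz c x : ℝ) ∧ ((W.card : ℝ))⁻¹ ≤ 4 / (sz c y : ℝ) := by
    intro x y hpxy hcxy hdes W hWdef
    obtain ⟨hlb, hb4⟩ := Tb_lb hsym hδ hclean hpxy hcxy (desig_le hdes)
    rw [← hWdef] at hlb
    have hx1 : (1 : ℝ) ≤ (sz c x : ℝ) := by exact_mod_cast sz_pos c x
    have hxy : (sz c x : ℝ) ≤ (sz c y : ℝ) := by exact_mod_cast desig_le hdes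
    have hne0 : W.card ≠ 0 := by
      intro h
      rw [h] at hlb
      norm_num at hlb
      linarith
    have hWpos : (0 : ℝ) < (W.card : ℝ) := by
      exact_mod_cast Nat.pos_of_ne_zero hne0
    have h2 : ((W.card : ℝ))⁻¹ ≤ ((sz c y : ℝ) / 4)⁻¹ := by
      apply inv_anti₀
      · linarith
      · exact hlb
    have h3 : ((sz c y : ℝ) / 4)⁻¹ = 4 / (sz c y : ℝ) := by field_simp
    rw [h3] at h2
    have h4 : 4 / (sz c y : ℝ) ≤ 4 / (sz c x : ℝ) := by
      gcongr
    exact ⟨hne0, by linarith, h2⟩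
  have hWd : Wf pos c (u, v) = if desig c u v then Tb pos c u v else Tb pos c v u := if_neg hc
  by_cases hdes : desig c u v
  · rw [hWd, if_pos hdes]
    exact key u v hp hc hdes _ rfl
  · have hdes' : desig c v u := (desig_total hc).resolve_left hdes
    rw [hWd, if_neg hdes]
    have hp' : pos v u = true := by rw [hsym v u]; exact hp
    obtain ⟨h1, h2, h3⟩ := key v u hp' (fun hh => hc hh.symm) hdes' _ rfl
    exact ⟨h1, h3, h2⟩

noncomputable def phi (c c' : V → ℕ) (t : (V × V) × V) : V × V :=
  if c t.1.1 = c t.1.2 then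
    (if c' t.2 = c' t.1.1 then srt t.1.2 t.2 else srt t.1.1 t.2)
  else
    if desig c t.1.1 t.1.2 then
      (if c' t.2 = c' t.1.1 then srt t.1.1 t.2 else srt t.1.2 t.2)
    else
      (if c' t.2 = c' t.1.2 then srt t.1.2 t.2 else srt t.1.1 t.2)

def GoodPair (pos : V → V → Bool) (c c' : V → ℕ) (f : V × V) : Prop :=
  f.1 < f.2 ∧ Disagree pos c' f.1 f.2 ∧ ¬ Disagree pos c f.1 f.2

lemma srt_good {pos : V → V → Bool} (hsym : ∀ u v, pos u v = pos v u) {c c' : V → ℕ}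
    {x y : V} (hne : x ≠ y) (h1 : Disagree pos c' x y) (h2 : ¬ Disagree pos c x y) :
    GoodPair pos c c' (srt x y) := by
  unfold srt
  split
  · exact ⟨by assumption, h1, h2⟩
  · have hlt : y < x := hne.lt_or_gt.resolve_left (by assumption)
    exact ⟨hlt, (Dis_symm hsym c' x y).1 h1, fun hh => h2 ((Dis_symm hsym c x y).2 hh)⟩

lemma phi_good {pos : V → V → Bool} (hsym : ∀ u v, pos u v = pos v u) {c c' : V → ℕ}
    {u v w : V} (hd : Disagree pos c u v)
    (hnd : ¬ Disagree pos c' u v) (hw : w ∈ Wf pos c (u, v)) :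
    GoodPair pos c c' (phi c c' ((u, v), w)) := by
  by_cases hc : c u = c v
  · -- internal
    have hp : pos u v = false := by
      rcases hd with ⟨_, h⟩ | ⟨h, _⟩
      · exact absurd hc ‹c u ≠ c v›
      · exact h
    have hc' : c' u ≠ c' v := fun h => hnd (Or.inr ⟨hp, h⟩)
    rw [Wf] at hw
    rw [if_pos hc] at hw
    simp only [Wint, Finset.mem_filter, Finset.mem_univ, true_and] at hw
    obtain ⟨hw1, hw2, hw3, hw4, hw5⟩ := hw
    rw [phi]
    simp only [if_pos hc]
    by_cases hcw : c' w = c' u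
    · rw [if_pos hcw]
      apply srt_good hsym (fun hh => hw3 hh.symm)
      · exact Or.inl ⟨hw5, fun hh => hc' (by omega)⟩
      · rintro (⟨_, hh⟩ | ⟨hh, _⟩)
        · exact hh (by omega)
        · rw [hw5] at hh; exact Bool.true_eq_false ▸ (by simp at hh)
    · rw [if_neg hcw]
      apply srt_good hsym (fun hh => hw2 hh.symm)
      · exact Or.inl ⟨hw4, fun hh => hcw hh.symm⟩
      · rintro (⟨_, hh⟩ | ⟨hh, _⟩)
        · exact hh hw1.symm
        · rw [hw4] at hh; exact Bool.true_eq_false ▸ (by simp at hh)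
  · -- external
    have hp : pos u v = true := by
      rcases hd with ⟨h, _⟩ | ⟨_, h⟩
      · exact h
      · exact absurd h hc
    have hc' : c' u = c' v := by
      by_contra h
      exact hnd (Or.inl ⟨hp, h⟩)
    rw [Wf] at hw
    rw [if_neg hc] at hw
    rw [phi]
    simp only [if_neg hc]
    by_cases hdes : desig c u v
    · rw [if_pos hdes] at hw ⊢
      simp only [Tb, Finset.mem_filter, Finset.mem_univ, true_and] at hw
      obtain ⟨hw1, hw2, hw3, hw4⟩ := hw
      by_cases hcw : c' w = c' u
      · rw [if_pos hcw]
        apply srt_good hsym (fun hh : u = w => hc (by rw [hh, hw1]))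
        · exact Or.inr ⟨hw4, hcw.symm⟩
        · rintro (⟨hh, _⟩ | ⟨_, hh⟩)
          · rw [hw4] at hh; exact Bool.true_eq_false ▸ (by simp at hh)
          · exact hc (hh.trans hw1)
      · rw [if_neg hcw]
        apply srt_good hsym (fun hh => hw2 hh.symm)
        · exact Or.inl ⟨hw3, fun hh => hcw (by omega)⟩
        · rintro (⟨_, hh⟩ | ⟨hh, _⟩)
          · exact hh hw1.symm
          · rw [hw3] at hh; exact Bool.true_eq_false ▸ (by simp at hh)
    · rw [if_neg hdes] at hw ⊢
      simp only [Tb, Finset.mem_filter, Finset.mem_univ, true_and] at hw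
      obtain ⟨hw1, hw2, hw3, hw4⟩ := hw
      by_cases hcw : c' w = c' v
      · rw [if_pos hcw]
        apply srt_good hsym (fun hh : v = w => hc (hw1 ▸ hh ▸ rfl))
        · exact Or.inr ⟨hw4, hcw.symm⟩
        · rintro (⟨hh, _⟩ | ⟨_, hh⟩)
          · rw [hw4] at hh; exact Bool.true_eq_false ▸ (by simp at hh)
          · exact hc (by omega)
      · rw [if_neg hcw]
        apply srt_good hsym (fun hh => hw2 hh.symm)
        · exact Or.inl ⟨hw3, fun hh => hcw (by omega)⟩
        · rintro (⟨_, hh⟩ | ⟨hh, _⟩)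
          · exact hh hw1.symm
          · rw [hw3] at hh; exact Bool.true_eq_false ▸ (by simp at hh)

noncomputable def Apairs (pos : V → V → Bool) (c c' : V → ℕ) : Finset (V × V) :=
  Finset.univ.filter (fun p : V × V => p.1 < p.2 ∧ Disagree pos c p.1 p.2 ∧ ¬ Disagree pos c' p.1 p.2)

noncomputable def TT (pos : V → V → Bool) (c c' : V → ℕ) : Finset ((V × V) × V) :=
  (Apairs pos c c' ×ˢ Finset.univ).filter (fun t => t.2 ∈ Wf pos c t.1)

noncomputable def wt (pos : V → V → Bool) (c : V → ℕ) (t : (V × V) × V) : ℝ :=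
  ((Wf pos c t.1).card : ℝ)⁻¹

lemma wt_nonneg (pos : V → V → Bool) (c : V → ℕ) (t : (V × V) × V) : 0 ≤ wt pos c t := by
  rw [wt]; positivity

lemma sum_union_le' {α : Type*} [DecidableEq α] (s t : Finset α) (f : α → ℝ)
    (hf : ∀ x, 0 ≤ f x) :
    ∑ x ∈ s ∪ t, f x ≤ ∑ x ∈ s, f x + ∑ x ∈ t, f x := by
  have h := Finset.sum_union_inter (s₁ := s) (s₂ := t) (f := f)
  have h2 : 0 ≤ ∑ x ∈ s ∩ t, f x := Finset.sum_nonneg (fun x _ => hf x)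
  linarith

lemma S_bound (hsym : ∀ u v, pos u v = pos v u) (hδ : δ ≤ 1/4)
    (hclean : ∀ i : ℕ, IsClean pos δ (Finset.univ.filter (fun v => c v = i)))
    (z r : V) :
    ∑ t ∈ ((Finset.univ.filter (fun x => Disagree pos c z x ∧ x ≠ z)).image
        (fun x => (srt z x, r))), wt pos c t ≤ 8 * δ := by
  set src := Finset.univ.filter (fun x => Disagree pos c z x ∧ x ≠ z) with hsrc
  have hszpos : (0 : ℝ) < (sz c z : ℝ) := by exact_mod_cast sz_pos c z
  have hper : ∀ t ∈ src.image (fun x => (srt z x, r)), wt pos c t ≤ 4 / (sz c z : ℝ) := by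
    intro t ht
    obtain ⟨x, hx, rfl⟩ := Finset.mem_image.1 ht
    rw [hsrc, Finset.mem_filter] at hx
    obtain ⟨-, hdis, hxz⟩ := hx
    rcases hdis with ⟨hpt, hcne⟩ | ⟨hpf, hceq⟩
    · by_cases hlt : z < x
      · rw [wt, srt_eq_of_lt hlt]
        exact (Wf_ext_facts hsym hδ hclean hpt hcne).2.1
      · have hgt : x < z := hxz.lt_or_gt.resolve_right hlt
        rw [wt, srt_eq_of_gt hgt]
        have hpt' : pos x z = true := by rw [hsym x z]; exact hpt
        exact (Wf_ext_facts hsym hδ hclean hpt' (fun hh => hcne hh.symm)).2.2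
    · by_cases hlt : z < x
      · rw [wt, srt_eq_of_lt hlt]
        exact (Wf_int_facts hsym hδ hclean hceq hpf (fun hh => hxz hh.symm)).2
      · have hgt : x < z := hxz.lt_or_gt.resolve_right hlt
        rw [wt, srt_eq_of_gt hgt]
        have hpf' : pos x z = false := by rw [hsym x z]; exact hpf
        have h := (Wf_int_facts hsym hδ hclean hceq.symm hpf' hxz).2
        rwa [sz_congr c hceq.symm] at h
  have h1 := Finset.sum_le_card_nsmul _ _ _ hper
  rw [nsmul_eq_mul] at h1
  have hcardle : ((src.image (fun x => (srt z x, r))).card : ℝ) ≤ (src.card : ℝ) := by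
    exact_mod_cast Finset.card_image_le
  have hsrcc : (src.card : ℝ) ≤ 2 * (δ * (sz c z : ℝ)) := src_card hsym hclean z
  have hfrac : (0 : ℝ) ≤ 4 / (sz c z : ℝ) := by positivity
  have h2 : ((src.image (fun x => (srt z x, r))).card : ℝ) * (4 / (sz c z : ℝ))
      ≤ (2 * (δ * (sz c z : ℝ))) * (4 / (sz c z : ℝ)) := by
    apply mul_le_mul_of_nonneg_right _ hfrac
    linarith
  have h3 : (2 * (δ * (sz c z : ℝ))) * (4 / (sz c z : ℝ)) = 8 * δ := by
    field_simp
    ring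
  linarith

lemma fiber_bound (hsym : ∀ u v, pos u v = pos v u) (hδ : δ ≤ 1/4)
    (hclean : ∀ i : ℕ, IsClean pos δ (Finset.univ.filter (fun v => c v = i)))
    (c' : V → ℕ) (p q : V) :
    ∑ t ∈ (TT pos c c').filter (fun t => phi c c' t = (p, q)), wt pos c t ≤ 4 := by
  set Sp := ((Finset.univ.filter (fun x => Disagree pos c p x ∧ x ≠ p)).image
      (fun x => (srt p x, q))) with hSp
  set Sq := ((Finset.univ.filter (fun x => Disagree pos c q x ∧ x ≠ q)).image
      (fun x => (srt q x, p))) with hSq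
  have hsub : (TT pos c c').filter (fun t => phi c c' t = (p, q)) ⊆ Sp ∪ Sq := by
    intro t ht
    rw [Finset.mem_filter] at ht
    obtain ⟨htTT, hphi⟩ := ht
    obtain ⟨⟨u, v⟩, w⟩ := t
    simp only [TT, Finset.mem_filter, Finset.mem_product] at htTT
    obtain ⟨⟨hA, -⟩, hwW⟩ := htTT
    simp only [Apairs, Finset.mem_filter] at hA
    obtain ⟨-, huv, hd, hnd⟩ := hA
    have key : ∀ α : V, (α = u ∨ α = v) → srt α w = (p, q) → ((u, v), w) ∈ Sp ∪ Sq := by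
      intro α hα hphi'
      have hx : ∃ x, Disagree pos c α x ∧ x ≠ α ∧ srt α x = (u, v) := by
        rcases hα with rfl | rfl
        · exact ⟨v, hd, huv.ne', srt_eq_of_lt huv⟩
        · exact ⟨u, (Dis_symm hsym c u α).1 hd, huv.ne, srt_eq_of_gt huv⟩
      obtain ⟨x, hdx, hxa, hsrt⟩ := hx
      rcases srt_cases hphi' with ⟨h1, h2⟩ | ⟨h1, h2⟩
      · refine Finset.mem_union.2 (Or.inl ?_)
        rw [hSp]
        refine Finset.mem_image.2 ⟨x, ?_, ?_⟩
        · simp only [Finset.mem_filter, Finset.mem_univ, true_and]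
          rw [← h1]
          exact ⟨hdx, hxa⟩
        · rw [← h1, hsrt, h2]
      · refine Finset.mem_union.2 (Or.inr ?_)
        rw [hSq]
        refine Finset.mem_image.2 ⟨x, ?_, ?_⟩
        · simp only [Finset.mem_filter, Finset.mem_univ, true_and]
          rw [← h1]
          exact ⟨hdx, hxa⟩
        · rw [← h1, hsrt, ← h2]
    simp only [phi] at hphi
    by_cases hc : c u = c v
    · simp only [if_pos hc] at hphi
      by_cases hcw : c' w = c' u
      · rw [if_pos hcw] at hphi; exact key v (Or.inr rfl) hphi
      · rw [if_neg hcw] at hphi; exact key u (Or.inl rfl) hphi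
    · simp only [if_neg hc] at hphi
      by_cases hdes : desig c u v
      · simp only [if_pos hdes] at hphi
        by_cases hcw : c' w = c' u
        · rw [if_pos hcw] at hphi; exact key u (Or.inl rfl) hphi
        · rw [if_neg hcw] at hphi; exact key v (Or.inr rfl) hphi
      · simp only [if_neg hdes] at hphi
        by_cases hcw : c' w = c' v
        · rw [if_pos hcw] at hphi; exact key v (Or.inr rfl) hphi
        · rw [if_neg hcw] at hphi; exact key u (Or.inl rfl) hphi
  have h1 : ∑ t ∈ (TT pos c c').filter (fun t => phi c c' t = (p, q)), wt pos c t
      ≤ ∑ t ∈ Sp ∪ Sq, wt pos c t :=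
    Finset.sum_le_sum_of_subset_of_nonneg hsub (fun t _ _ => wt_nonneg pos c t)
  have h2 := sum_union_le' Sp Sq (wt pos c) (wt_nonneg pos c)
  have h3 := S_bound hsym hδ hclean p q
  have h4 := S_bound hsym hδ hclean q p
  rw [← hSp] at h3
  rw [← hSq] at h4
  linarith

lemma main_count (hsym : ∀ u v, pos u v = pos v u) (hδ : δ ≤ 1/4)
    (hclean : ∀ i : ℕ, IsClean pos δ (Finset.univ.filter (fun v => c v = i)))
    (c' : V → ℕ) :
    (Apairs pos c c').card ≤ 4 * (Apairs pos c' c).card := by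
  have hreal : ((Apairs pos c c').card : ℝ) ≤ 4 * ((Apairs pos c' c).card : ℝ) := by
    have hWne : ∀ e ∈ Apairs pos c c', (Wf pos c e).card ≠ 0 := by
      intro e he
      obtain ⟨u, v⟩ := e
      simp only [Apairs, Finset.mem_filter, Finset.mem_univ, true_and] at he
      obtain ⟨hlt, hd, -⟩ := he
      rcases hd with ⟨hp, hc⟩ | ⟨hp, hc⟩
      · exact (Wf_ext_facts hsym hδ hclean hp hc).1
      · exact (Wf_int_facts hsym hδ hclean hc hp hlt.ne).1
    have hemit : ∀ e ∈ Apairs pos c c',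
        (∑ w ∈ Finset.univ, if w ∈ Wf pos c e then wt pos c (e, w) else 0) = 1 := by
      intro e he
      rw [Finset.sum_ite_mem, Finset.univ_inter]
      simp only [wt]
      rw [Finset.sum_const, nsmul_eq_mul, mul_inv_cancel₀]
      exact Nat.cast_ne_zero.2 (hWne e he)
    have hstep1 : ((Apairs pos c c').card : ℝ) = ∑ t ∈ TT pos c c', wt pos c t := by
      calc ((Apairs pos c c').card : ℝ) = ∑ _e ∈ Apairs pos c c', (1 : ℝ) := by
            rw [Finset.sum_const, nsmul_eq_mul, mul_one]
        _ = ∑ e ∈ Apairs pos c c',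
              ∑ w ∈ Finset.univ, (if w ∈ Wf pos c e then wt pos c (e, w) else 0) :=
            Finset.sum_congr rfl (fun e he => (hemit e he).symm)
        _ = ∑ t ∈ TT pos c c', wt pos c t := by
            rw [TT, Finset.sum_filter, Finset.sum_product]
    have hmaps : ∀ t ∈ TT pos c c', phi c c' t ∈ Apairs pos c' c := by
      intro t ht
      simp only [TT, Finset.mem_filter, Finset.mem_product] at ht
      obtain ⟨⟨hA, -⟩, hw⟩ := ht
      obtain ⟨⟨u, v⟩, w⟩ := t
      simp only [Apairs, Finset.mem_filter, Finset.mem_univ, true_and] at hA ⊢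
      obtain ⟨huv, hd, hnd⟩ := hA
      have hg := phi_good hsym hd hnd hw
      exact ⟨hg.1, hg.2.1, hg.2.2⟩
    have hfib := Finset.sum_fiberwise_of_maps_to hmaps (wt pos c)
    have hbound : ∀ f ∈ Apairs pos c' c,
        ∑ t ∈ (TT pos c c').filter (fun t => phi c c' t = f), wt pos c t ≤ 4 := by
      intro f _
      obtain ⟨p, q⟩ := f
      exact fiber_bound hsym hδ hclean c' p q
    calc ((Apairs pos c c').card : ℝ) = ∑ t ∈ TT pos c c', wt pos c t := hstep1
      _ = ∑ f ∈ Apairs pos c' c,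
            ∑ t ∈ (TT pos c c').filter (fun t => phi c c' t = f), wt pos c t := hfib.symm
      _ ≤ ∑ _f ∈ Apairs pos c' c, (4 : ℝ) := Finset.sum_le_sum hbound
      _ = 4 * ((Apairs pos c' c).card : ℝ) := by
          rw [Finset.sum_const, nsmul_eq_mul]; ring
  exact_mod_cast hreal

end CC4

/-- If every cluster of a clustering `c` is `δ`-clean with `δ ≤ 1/4`, then the number of
disagreements of `c` is at most `4` times that of any clustering `c'` (in particular
of an optimal one). -/
theorem clean_clustering_four_approx {V : Type*} [Fintype V] [LinearOrder V]
    (pos : V → V → Bool) (hsym : ∀ u v, pos u v = pos v u)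
    (δ : ℝ) (hδ : δ ≤ 1/4)
    (c : V → ℕ)
    (hclean : ∀ i : ℕ, IsClean pos δ (Finset.univ.filter (fun v => c v = i)))
    (c' : V → ℕ) :
    disagreements pos c ≤ 4 * disagreements pos c' := by
  classical
  have key := CC4.main_count hsym hδ hclean c'
  set Dc : Finset (V × V) :=
    Finset.univ.filter (fun p : V × V => p.1 < p.2 ∧ Disagree pos c p.1 p.2) with hDc
  set Dc' : Finset (V × V) :=
    Finset.univ.filter (fun p : V × V => p.1 < p.2 ∧ Disagree pos c' p.1 p.2) with hDc'
  have g1 : disagreements pos c = Dc.card := by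
    rw [disagreements, hDc]
    congr 1
    ext pq
    simp only [Finset.mem_filter]
  have g2 : disagreements pos c' = Dc'.card := by
    rw [disagreements, hDc']
    congr 1
    ext pq
    simp only [Finset.mem_filter]
  have split1 := Finset.card_filter_add_card_filter_not
    (s := Dc) (p := fun p => Disagree pos c' p.1 p.2)
  have split2 := Finset.card_filter_add_card_filter_not
    (s := Dc') (p := fun p => Disagree pos c p.1 p.2)
  have e1 : Dc.filter (fun p => ¬ Disagree pos c' p.1 p.2) = CC4.Apairs pos c c' := by
    rw [hDc]
    ext pq
    simp only [CC4.Apairs, Finset.mem_filter, Finset.mem_univ, true_and]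
    tauto
  have e2 : Dc'.filter (fun p => ¬ Disagree pos c p.1 p.2) = CC4.Apairs pos c' c := by
    rw [hDc']
    ext pq
    simp only [CC4.Apairs, Finset.mem_filter, Finset.mem_univ, true_and]
    tauto
  have e3 : Dc.filter (fun p => Disagree pos c' p.1 p.2)
      = Dc'.filter (fun p => Disagree pos c p.1 p.2) := by
    rw [hDc, hDc']
    ext pq
    simp only [Finset.mem_filter, Finset.mem_univ, true_and]
    tauto
  rw [e1] at split1
  rw [e2] at split2
  rw [e3] at split1
  omega
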